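/- Let k ≥ 1, J = [[0, I_k], [−I_k, 0]] ∈ M_{2k}(ℝ), G_ℂ = { A ∈ GL_{2k}(ℝ) : A·J = J·A }, and V = [[0, I_k], [I_k, 0]] ∈ M_{2k}(ℝ). Then V is invertible with V² = I, V·J = −J·V (so V lies in the normalizer N(G_ℂ) but not in G_ℂ), and every B ∈ N(G_ℂ) can be written in exactly one of the two forms B = C or B = C·V with C ∈ G_ℂ. Consequently G_ℂ has index 2 in N(G_ℂ). -/

import Mathlib

open Matrix

/-- The standard complex structure matrix `J = [[0, I], [-I, 0]]`. -/
def symplJ (k : ℕ) : Matrix (Fin k ⊕ Fin k) (Fin k ⊕ Fin k) ℝ :=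
  Matrix.fromBlocks 0 1 (-1) 0

/-- The image `G_ℂ = { A ∈ GL_{2k}(ℝ) : A·J = J·A }` of `GL_k(ℂ)` under its
standard real embedding, as a subgroup of `GL_{2k}(ℝ)`. -/
def GLC (k : ℕ) : Subgroup (GL (Fin k ⊕ Fin k) ℝ) where
  carrier := {A | (A : Matrix (Fin k ⊕ Fin k) (Fin k ⊕ Fin k) ℝ) * symplJ k =
    symplJ k * (A : Matrix (Fin k ⊕ Fin k) (Fin k ⊕ Fin k) ℝ)}
  one_mem' := by simp
  mul_mem' := by
    intro a b ha hb
    simp only [Set.mem_setOf_eq] at *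
    set M := (a : Matrix (Fin k ⊕ Fin k) (Fin k ⊕ Fin k) ℝ)
    set N := (b : Matrix (Fin k ⊕ Fin k) (Fin k ⊕ Fin k) ℝ)
    have : ((a * b : GL (Fin k ⊕ Fin k) ℝ) : Matrix (Fin k ⊕ Fin k) (Fin k ⊕ Fin k) ℝ)
        = M * N := rfl
    rw [this, mul_assoc, hb, ← mul_assoc, ha, mul_assoc]
  inv_mem' := by
    intro a ha
    simp only [Set.mem_setOf_eq] at *
    set M := (a : Matrix (Fin k ⊕ Fin k) (Fin k ⊕ Fin k) ℝ)
    set N := ((a⁻¹ : GL (Fin k ⊕ Fin k) ℝ) : Matrix (Fin k ⊕ Fin k) (Fin k ⊕ Fin k) ℝ)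
    have hMN : M * N = 1 := a.mul_inv
    have hNM : N * M = 1 := a.inv_mul
    calc N * symplJ k = N * symplJ k * (M * N) := by rw [hMN, mul_one]
      _ = N * (symplJ k * M) * N := by noncomm_ring
      _ = N * (M * symplJ k) * N := by rw [ha]
      _ = (N * M) * (symplJ k * N) := by noncomm_ring
      _ = symplJ k * N := by rw [hNM, one_mul]

/-- The matrix `V = [[0, I], [I, 0]]` as an element of `GL_{2k}(ℝ)`. -/
def swapV (k : ℕ) : GL (Fin k ⊕ Fin k) ℝ where
  val := Matrix.fromBlocks 0 1 1 0
  inv := Matrix.fromBlocks 0 1 1 0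
  val_inv := by simp [Matrix.fromBlocks_multiply, ← Matrix.fromBlocks_one]
  inv_val := by simp [Matrix.fromBlocks_multiply, ← Matrix.fromBlocks_one]

lemma J_mul_J (k : ℕ) : symplJ k * symplJ k = -1 := by
  simp [symplJ, Matrix.fromBlocks_multiply, ← Matrix.fromBlocks_one, Matrix.fromBlocks_neg]

lemma mem_GLC_iff {k : ℕ} {A : GL (Fin k ⊕ Fin k) ℝ} :
    A ∈ GLC k ↔ (A : Matrix (Fin k ⊕ Fin k) (Fin k ⊕ Fin k) ℝ) * symplJ k =
      symplJ k * (A : Matrix (Fin k ⊕ Fin k) (Fin k ⊕ Fin k) ℝ) := Iff.rfl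

def JU (k : ℕ) : GL (Fin k ⊕ Fin k) ℝ where
  val := symplJ k
  inv := -symplJ k
  val_inv := by rw [mul_neg, J_mul_J, neg_neg]
  inv_val := by rw [neg_mul, J_mul_J, neg_neg]

lemma JU_mem (k : ℕ) : JU k ∈ GLC k := rfl

lemma eval_cp {k : ℕ} (P : Matrix (Fin k) (Fin k) ℝ) (r : ℝ) :
    (P.charpoly).eval r = (r • (1 : Matrix (Fin k) (Fin k) ℝ) - P).det := by
  rw [Matrix.charpoly, ← Polynomial.coe_evalRingHom, RingHom.map_det]
  congr 1
  ext i j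
  by_cases h : i = j <;>
    simp [Matrix.charmatrix_apply, Matrix.one_apply, h, Matrix.diagonal_apply]

lemma exists_c {k : ℕ} (P : Matrix (Fin k) (Fin k) ℝ) :
    ∃ c : ℝ, IsUnit (c • (1 : Matrix (Fin k) (Fin k) ℝ) - P).det := by
  by_contra hcon
  push_neg at hcon
  have : P.charpoly = 0 := by
    apply Polynomial.zero_of_eval_zero
    intro c
    rw [eval_cp]
    simpa [isUnit_iff_ne_zero] using hcon c
  exact (Matrix.charpoly_monic P).ne_zero this

lemma diagBlock_comm {k : ℕ} (N : Matrix (Fin k ⊕ Fin k) (Fin k ⊕ Fin k) ℝ)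
    (h : ∀ g ∈ GLC k, (g : Matrix (Fin k ⊕ Fin k) (Fin k ⊕ Fin k) ℝ) * N =
      N * (g : Matrix (Fin k ⊕ Fin k) (Fin k ⊕ Fin k) ℝ))
    (P : Matrix (Fin k) (Fin k) ℝ) :
    fromBlocks P 0 0 P * N = N * fromBlocks P 0 0 P := by
  obtain ⟨c, hc⟩ := exists_c P
  set M := c • (1 : Matrix (Fin k) (Fin k) ℝ) - P with hM
  have hdet : IsUnit (fromBlocks M 0 0 M).det := by
    rw [Matrix.det_fromBlocks_zero₂₁]
    exact hc.mul hc
  obtain ⟨u, hu⟩ := (Matrix.isUnit_iff_isUnit_det _).mpr hdet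
  have humem : u ∈ GLC k := by
    rw [mem_GLC_iff, hu]
    simp [symplJ, Matrix.fromBlocks_multiply]
  have hcomm : fromBlocks M 0 0 M * N = N * fromBlocks M 0 0 M := by
    rw [← hu]; exact h u humem
  have hPM : fromBlocks P 0 0 P =
      c • (1 : Matrix (Fin k ⊕ Fin k) (Fin k ⊕ Fin k) ℝ) - fromBlocks M 0 0 M := by
    rw [hM, ← Matrix.fromBlocks_one, Matrix.fromBlocks_smul]
    ext i j
    rcases i with i | i <;> rcases j with j | j <;> simp [Matrix.fromBlocks]
  rw [hPM, sub_mul, mul_sub, hcomm, smul_mul_assoc, mul_smul_comm, one_mul, mul_one]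

lemma smul_one_diag {k : ℕ} (a : ℝ) :
    (Matrix.diagonal fun _ => a) = a • (1 : Matrix (Fin k) (Fin k) ℝ) := by
  ext i j; by_cases h : i = j <;> simp [h, Matrix.one_apply, Matrix.diagonal_apply]

lemma commutant {k : ℕ} (N : Matrix (Fin k ⊕ Fin k) (Fin k ⊕ Fin k) ℝ)
    (h : ∀ g ∈ GLC k, (g : Matrix (Fin k ⊕ Fin k) (Fin k ⊕ Fin k) ℝ) * N =
      N * (g : Matrix (Fin k ⊕ Fin k) (Fin k ⊕ Fin k) ℝ)) :
    ∃ w x : ℝ, N = w • 1 + x • symplJ k := by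
  set W := N.toBlocks₁₁ with hW
  set X := N.toBlocks₁₂ with hX
  set Y := N.toBlocks₂₁ with hY
  set Z := N.toBlocks₂₂ with hZ
  have hN : N = fromBlocks W X Y Z := (Matrix.fromBlocks_toBlocks N).symm
  have hblk : ∀ P : Matrix (Fin k) (Fin k) ℝ,
      P * W = W * P ∧ P * X = X * P ∧ P * Y = Y * P ∧ P * Z = Z * P := by
    intro P
    have h1 := diagBlock_comm N h P
    rw [hN, Matrix.fromBlocks_multiply, Matrix.fromBlocks_multiply] at h1
    refine ⟨?_, ?_, ?_, ?_⟩
    · simpa using congrArg Matrix.toBlocks₁₁ h1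
    · simpa using congrArg Matrix.toBlocks₁₂ h1
    · simpa using congrArg Matrix.toBlocks₂₁ h1
    · simpa using congrArg Matrix.toBlocks₂₂ h1
  have hscal : ∀ M : Matrix (Fin k) (Fin k) ℝ, (∀ P, P * M = M * P) →
      ∃ a : ℝ, M = a • 1 := by
    intro M hM
    obtain ⟨a, ha⟩ := Matrix.mem_range_scalar_of_commute_single
      (fun i j _ => hM (Matrix.single i j 1))
    exact ⟨a, by rw [← ha, Matrix.scalar_apply, smul_one_diag]⟩
  obtain ⟨w, hw⟩ := hscal W fun P => (hblk P).1
  obtain ⟨x, hx⟩ := hscal X fun P => (hblk P).2.1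
  obtain ⟨y, hy⟩ := hscal Y fun P => (hblk P).2.2.1
  obtain ⟨z, hz⟩ := hscal Z fun P => (hblk P).2.2.2
  -- use commutation with J itself
  have hJ := h (JU k) (JU_mem k)
  have hJ' : symplJ k * N = N * symplJ k := hJ
  rw [hN, symplJ, Matrix.fromBlocks_multiply, Matrix.fromBlocks_multiply] at hJ'
  have e12 : (1 : Matrix (Fin k) (Fin k) ℝ) * Z = W * 1 := by
    have := congrArg Matrix.toBlocks₁₂ hJ'
    simpa using this
  have e11 : (1 : Matrix (Fin k) (Fin k) ℝ) * Y = X * (-1) := by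
    have := congrArg Matrix.toBlocks₁₁ hJ'
    simpa using this
  refine ⟨w, x, ?_⟩
  have hZW : Z = W := by rw [← one_mul Z, e12, mul_one]
  have hYX : Y = -(x • (1 : Matrix (Fin k) (Fin k) ℝ)) := by
    rw [← one_mul Y, e11, hx]
    ext i j; simp [Matrix.one_apply]
  rw [hN, hw, hx, hYX, hZW, hw, symplJ]
  ext i j
  rcases i with i | i <;> rcases j with j | j  <;>
    simp [Matrix.fromBlocks, Matrix.one_apply]

lemma conj_comm_aux {n : Type*} [Fintype n] [DecidableEq n]
    (B Binv J g : Matrix n n ℝ) (h1 : Binv * B = 1)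
    (hc : (B * g * Binv) * J = J * (B * g * Binv)) :
    g * (Binv * J * B) = (Binv * J * B) * g := by
  calc g * (Binv * J * B) = (Binv * B) * g * (Binv * J * B) := by rw [h1, one_mul]
    _ = Binv * ((B * g * Binv) * J) * B := by noncomm_ring
    _ = Binv * (J * (B * g * Binv)) * B := by rw [hc]
    _ = (Binv * J * B) * g * (Binv * B) := by noncomm_ring
    _ = (Binv * J * B) * g := by rw [h1, mul_one]


/-- Splitting and semidirect product decomposition in the paper's Lemma 6.1
(lem:N(GL(C))): `V² = I`, `V·J = -J·V`, `V` normalizes `G_ℂ` without lying in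
it, every `B ∈ N(G_ℂ)` is of exactly one of the forms `C` or `C·V` with
`C ∈ G_ℂ`, and `G_ℂ` has index `2` in `N(G_ℂ)`. -/
theorem GLC_normalizer_splitting (k : ℕ) (hk : 1 ≤ k) :
    (swapV k : Matrix (Fin k ⊕ Fin k) (Fin k ⊕ Fin k) ℝ) *
        (swapV k : Matrix (Fin k ⊕ Fin k) (Fin k ⊕ Fin k) ℝ) = 1 ∧
    (swapV k : Matrix (Fin k ⊕ Fin k) (Fin k ⊕ Fin k) ℝ) * symplJ k =
      -(symplJ k * (swapV k : Matrix (Fin k ⊕ Fin k) (Fin k ⊕ Fin k) ℝ)) ∧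
    swapV k ∈ (Subgroup.normalizer (GLC k : Set (GL (Fin k ⊕ Fin k) ℝ))) ∧
    swapV k ∉ GLC k ∧
    (∀ B ∈ (Subgroup.normalizer (GLC k : Set (GL (Fin k ⊕ Fin k) ℝ))),
      Xor' (B ∈ GLC k) (∃ C ∈ GLC k, B = C * swapV k)) ∧
    ((GLC k).subgroupOf (Subgroup.normalizer (GLC k : Set (GL (Fin k ⊕ Fin k) ℝ)))).index = 2 := by
  set J := symplJ k with hJdef
  have hVm : (swapV k : Matrix (Fin k ⊕ Fin k) (Fin k ⊕ Fin k) ℝ)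
      = fromBlocks 0 1 1 0 := rfl
  set Vm := (swapV k : Matrix (Fin k ⊕ Fin k) (Fin k ⊕ Fin k) ℝ) with hVmdef
  have i0 : Fin k := ⟨0, hk⟩
  -- 1. V² = 1
  have hVV : Vm * Vm = 1 := by
    rw [hVm]
    simp [Matrix.fromBlocks_multiply, ← Matrix.fromBlocks_one]
  have hVVgl : swapV k * swapV k = 1 := Units.ext hVV
  have hVinv : (swapV k)⁻¹ = swapV k := (inv_eq_of_mul_eq_one_right hVVgl).symm
  -- 2. VJ = -(JV)
  have hVJc : Vm * J = fromBlocks (-1) 0 0 1 := by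
    rw [hVm, hJdef, symplJ]
    simp [Matrix.fromBlocks_multiply]
  have hJVc : J * Vm = fromBlocks 1 0 0 (-1) := by
    rw [hVm, hJdef, symplJ]
    simp [Matrix.fromBlocks_multiply]
  have hVJ : Vm * J = -(J * Vm) := by
    rw [hVJc, hJVc, Matrix.fromBlocks_neg]
    simp
  -- 4. V ∉ GLC
  have hVnot : swapV k ∉ GLC k := by
    intro hmem
    have h1 : Vm * J = J * Vm := hmem
    rw [hVJc, hJVc] at h1
    have h2 := congrFun (congrFun h1 (Sum.inl i0)) (Sum.inl i0)
    simp [Matrix.fromBlocks, Matrix.one_apply] at h2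
    linarith
  -- 3. V ∈ normalizer
  have hconj : ∀ g : GL (Fin k ⊕ Fin k) ℝ, g ∈ GLC k →
      swapV k * g * (swapV k)⁻¹ ∈ GLC k := by
    intro g hg
    rw [mem_GLC_iff]
    have hcoe : ((swapV k * g * (swapV k)⁻¹ : GL (Fin k ⊕ Fin k) ℝ) :
        Matrix (Fin k ⊕ Fin k) (Fin k ⊕ Fin k) ℝ)
        = Vm * (g : Matrix (Fin k ⊕ Fin k) (Fin k ⊕ Fin k) ℝ) * Vm := by
      rw [hVinv]; rfl
    set gm := (g : Matrix (Fin k ⊕ Fin k) (Fin k ⊕ Fin k) ℝ) with hgm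
    have hgJ : gm * J = J * gm := hg
    rw [hcoe]
    calc Vm * gm * Vm * J = Vm * gm * (Vm * J) := by rw [mul_assoc]
      _ = Vm * gm * (-(J * Vm)) := by rw [hVJ]
      _ = -(Vm * (gm * J) * Vm) := by noncomm_ring
      _ = -(Vm * (J * gm) * Vm) := by rw [hgJ]
      _ = -((Vm * J) * (gm * Vm)) := by noncomm_ring
      _ = -((-(J * Vm)) * (gm * Vm)) := by rw [hVJ]
      _ = J * (Vm * gm * Vm) := by noncomm_ring
  have hVnorm : swapV k ∈ Subgroup.normalizer (GLC k : Set (GL (Fin k ⊕ Fin k) ℝ)) := by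
    rw [Subgroup.mem_normalizer_iff]
    intro g
    constructor
    · exact hconj g
    · intro hg
      have h2 := hconj _ hg
      have h3 : swapV k * (swapV k * g * (swapV k)⁻¹) * (swapV k)⁻¹ = g := by
        rw [hVinv]
        have h4 : swapV k * (swapV k * g * swapV k) * swapV k
            = swapV k * (swapV k * (g * (swapV k * swapV k))) := by
          simp only [mul_assoc]
        rw [h4, hVVgl, mul_one, ← mul_assoc, hVVgl, one_mul]
      rwa [h3] at h2
  -- 5. the Xor
  have hxor : ∀ B ∈ Subgroup.normalizer (GLC k : Set (GL (Fin k ⊕ Fin k) ℝ)),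
      Xor' (B ∈ GLC k) (∃ C ∈ GLC k, B = C * swapV k) := by
    intro B hB
    set Bm := (B : Matrix (Fin k ⊕ Fin k) (Fin k ⊕ Fin k) ℝ) with hBm
    set Bim := ((B⁻¹ : GL (Fin k ⊕ Fin k) ℝ) :
      Matrix (Fin k ⊕ Fin k) (Fin k ⊕ Fin k) ℝ) with hBim
    have hBmul : Bm * Bim = 1 := B.mul_inv
    have hBinvmul : Bim * Bm = 1 := B.inv_mul
    have hcomm : ∀ g ∈ GLC k, (g : Matrix (Fin k ⊕ Fin k) (Fin k ⊕ Fin k) ℝ) *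
        (Bim * J * Bm) = (Bim * J * Bm) *
        (g : Matrix (Fin k ⊕ Fin k) (Fin k ⊕ Fin k) ℝ) := by
      intro g hg
      have h1 : B * g * B⁻¹ ∈ GLC k := (Subgroup.mem_normalizer_iff.mp hB g).mp hg
      have h2 : (Bm * (g : Matrix (Fin k ⊕ Fin k) (Fin k ⊕ Fin k) ℝ) * Bim) * J
          = J * (Bm * (g : Matrix (Fin k ⊕ Fin k) (Fin k ⊕ Fin k) ℝ) * Bim) := h1
      exact conj_comm_aux Bm Bim J _ hBinvmul h2
    obtain ⟨w, x, hN⟩ := commutant (Bim * J * Bm) hcomm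
    have hJ'sq : (Bim * J * Bm) * (Bim * J * Bm) = -1 := by
      calc (Bim * J * Bm) * (Bim * J * Bm)
          = Bim * J * (Bm * Bim) * J * Bm := by noncomm_ring
        _ = Bim * (J * J) * Bm := by rw [hBmul]; noncomm_ring
        _ = Bim * (-1) * Bm := by rw [hJdef, J_mul_J]
        _ = -(Bim * Bm) := by noncomm_ring
        _ = -1 := by rw [hBinvmul]
    have hsq : (w • (1 : Matrix (Fin k ⊕ Fin k) (Fin k ⊕ Fin k) ℝ) + x • J) *
        (w • (1 : Matrix (Fin k ⊕ Fin k) (Fin k ⊕ Fin k) ℝ) + x • J) = -1 := by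
      rw [← hN]; exact hJ'sq
    have hexp : (w • (1 : Matrix (Fin k ⊕ Fin k) (Fin k ⊕ Fin k) ℝ) + x • J) *
        (w • (1 : Matrix (Fin k ⊕ Fin k) (Fin k ⊕ Fin k) ℝ) + x • J)
        = (w * w - x * x) • (1 : Matrix (Fin k ⊕ Fin k) (Fin k ⊕ Fin k) ℝ)
          + (w * x + w * x) • J := by
      have hJJ : J * J = -1 := J_mul_J k
      simp only [add_mul, mul_add, smul_mul_assoc, mul_smul_comm, smul_smul,
        one_mul, mul_one, hJJ]
      module
    have hone : (-1 : Matrix (Fin k ⊕ Fin k) (Fin k ⊕ Fin k) ℝ)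
        = (-1 : ℝ) • (1 : Matrix (Fin k ⊕ Fin k) (Fin k ⊕ Fin k) ℝ) + (0 : ℝ) • J := by
      simp
    have hent1 : ∀ a b : ℝ,
        (a • (1 : Matrix (Fin k ⊕ Fin k) (Fin k ⊕ Fin k) ℝ) + b • J)
          (Sum.inl i0) (Sum.inl i0) = a := by
      intro a b
      simp [hJdef, symplJ, Matrix.fromBlocks, Matrix.one_apply]
    have hent2 : ∀ a b : ℝ,
        (a • (1 : Matrix (Fin k ⊕ Fin k) (Fin k ⊕ Fin k) ℝ) + b • J)
          (Sum.inl i0) (Sum.inr i0) = b := by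
      intro a b
      simp [hJdef, symplJ, Matrix.fromBlocks, Matrix.one_apply]
    have heq : (w * w - x * x) • (1 : Matrix (Fin k ⊕ Fin k) (Fin k ⊕ Fin k) ℝ)
        + (w * x + w * x) • J
        = (-1 : ℝ) • (1 : Matrix (Fin k ⊕ Fin k) (Fin k ⊕ Fin k) ℝ) + (0 : ℝ) • J := by
      rw [← hexp, hsq, hone]
    have e1 : w * w - x * x = -1 := by
      have := congrFun (congrFun heq (Sum.inl i0)) (Sum.inl i0)
      rwa [hent1, hent1] at this
    have e2 : w * x + w * x = 0 := by
      have := congrFun (congrFun heq (Sum.inl i0)) (Sum.inr i0)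
      rwa [hent2, hent2] at this
    have hw0 : w = 0 := by nlinarith [sq_nonneg w, sq_nonneg x, sq_nonneg (w + x), sq_nonneg (w - x)]
    have hx2 : x = 1 ∨ x = -1 := by
      have : (x - 1) * (x + 1) = 0 := by nlinarith
      rcases mul_eq_zero.mp this with h | h
      · left; linarith
      · right; linarith
    rcases hx2 with hx1 | hx1
    · -- B ∈ GLC
      have hJ' : Bim * J * Bm = J := by
        rw [hN, hw0, hx1]; simp [hJdef]
      have hBmem : B ∈ GLC k := by
        rw [mem_GLC_iff]
        calc Bm * J = Bm * (Bim * J * Bm) := by rw [hJ']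
          _ = (Bm * Bim) * (J * Bm) := by noncomm_ring
          _ = J * Bm := by rw [hBmul, one_mul]
      left
      refine ⟨hBmem, ?_⟩
      rintro ⟨C, hC, hBC⟩
      have hV : swapV k = C⁻¹ * B := by rw [hBC]; group
      have : swapV k ∈ GLC k := by
        rw [hV]; exact mul_mem (inv_mem hC) hBmem
      exact hVnot this
    · -- B = C * V
      have hJ' : Bim * J * Bm = -J := by
        rw [hN, hw0, hx1]; simp [hJdef]
      have hBJ : Bm * J = -(J * Bm) := by
        have h1 : Bm * (Bim * J * Bm) = Bm * (-J) := by rw [hJ']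
        have h2 : J * Bm = -(Bm * J) := by
          calc J * Bm = (Bm * Bim) * J * Bm := by rw [hBmul, one_mul]
            _ = Bm * (Bim * J * Bm) := by noncomm_ring
            _ = Bm * (-J) := h1
            _ = -(Bm * J) := by noncomm_ring
        rw [h2, neg_neg]
      right
      constructor
      · refine ⟨B * swapV k, ?_, by rw [mul_assoc, hVVgl, mul_one]⟩
        rw [mem_GLC_iff]
        have hCm : ((B * swapV k : GL (Fin k ⊕ Fin k) ℝ) :
            Matrix (Fin k ⊕ Fin k) (Fin k ⊕ Fin k) ℝ) = Bm * Vm := rfl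
        rw [hCm]
        calc Bm * Vm * J = Bm * (Vm * J) := by rw [mul_assoc]
          _ = Bm * (-(J * Vm)) := by rw [hVJ]
          _ = -(Bm * J) * Vm := by noncomm_ring
          _ = -(-(J * Bm)) * Vm := by rw [hBJ]
          _ = J * (Bm * Vm) := by noncomm_ring
      · intro hBmem
        have hBJ2 : Bm * J = J * Bm := hBmem
        have hz : J * Bm = 0 := by
          have h3 : J * Bm = -(J * Bm) := hBJ2.symm.trans hBJ
          have h4 : (2 : ℝ) • (J * Bm) = 0 := by
            rw [two_smul]
            nth_rewrite 1 [h3]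
            simp
          have := smul_eq_zero.mp h4
          simpa using this
        have hB0 : Bm = 0 := by
          calc Bm = 1 * Bm := by rw [one_mul]
            _ = (-(J * J)) * Bm := by rw [hJdef, J_mul_J]; simp
            _ = -(J * (J * Bm)) := by noncomm_ring
            _ = 0 := by rw [hz]; simp
        have h10 : (1 : Matrix (Fin k ⊕ Fin k) (Fin k ⊕ Fin k) ℝ) = 0 := by
          rw [← hBmul, hB0, zero_mul]
        have := congrFun (congrFun h10 (Sum.inl i0)) (Sum.inl i0)
        simp [Matrix.one_apply] at this
  -- 6. index
  refine ⟨hVV, hVJ, hVnorm, hVnot, hxor, ?_⟩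
  rw [Subgroup.index_eq_two_iff]
  refine ⟨⟨swapV k, hVnorm⟩, fun b => ?_⟩
  have hbx := hxor (↑b) b.2
  have hiff : (∃ C ∈ GLC k, (b : GL (Fin k ⊕ Fin k) ℝ) = C * swapV k) ↔
      (b : GL (Fin k ⊕ Fin k) ℝ) * swapV k ∈ GLC k := by
    constructor
    · rintro ⟨C, hC, hbc⟩
      rw [hbc, mul_assoc, hVVgl, mul_one]
      exact hC
    · intro h
      exact ⟨(b : GL (Fin k ⊕ Fin k) ℝ) * swapV k, h, by rw [mul_assoc, hVVgl, mul_one]⟩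
  rw [Subgroup.mem_subgroupOf, Subgroup.mem_subgroupOf]
  have hco : ((b * ⟨swapV k, hVnorm⟩ : Subgroup.normalizer (GLC k : Set (GL (Fin k ⊕ Fin k) ℝ))) : GL (Fin k ⊕ Fin k) ℝ)
      = (b : GL (Fin k ⊕ Fin k) ℝ) * swapV k := rfl
  rw [hco]
  rcases hbx with ⟨h1, h2⟩ | ⟨h1, h2⟩
  · exact Or.inr ⟨h1, fun hh => h2 (hiff.mpr hh)⟩
  · exact Or.inl ⟨hiff.mp h1, h2⟩
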